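/- (Matrix case / Corollary) Let A_0, A_1,...,A_p be real symmetric n×n matrices and suppose there is a nonsingular matrix Q such that QᵀA_lQ has nonpositive off-diagonal entries for every l. Then exactly one of the following holds: (i) there is x ∈ ℝ^n with xᵀA_lx < 0 for all l = 0,...,p; (ii) there are λ_l ≥ 0 summing to 1 such that ∑_{l=0}^p λ_l A_l is positive semidefinite. -/

import Mathlib

open Finset MvPolynomial

noncomputable section

/-- Entrywise inner product of two m-th order n-dimensional tensors. -/
def tIP {m n : ℕ} (A B : (Fin m → Fin n) → ℝ) : ℝ :=
  ∑ i : Fin m → Fin n, A i * B i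

/-- The rank-one tensor `x^{⊗m}` with entries `x_{i_1} ⋯ x_{i_m}`. -/
def rk1 {n : ℕ} (m : ℕ) (x : Fin n → ℝ) : (Fin m → Fin n) → ℝ :=
  fun i => ∏ k, x (i k)

/-- A tensor is symmetric if invariant under permutations of its indices. -/
def TSymm {m n : ℕ} (A : (Fin m → Fin n) → ℝ) : Prop :=
  ∀ (σ : Equiv.Perm (Fin m)) (i : Fin m → Fin n), A (i ∘ σ) = A i

/-- Essentially nonpositive: entries with indices not all equal are ≤ 0. -/
def EssNonpos {m n : ℕ} (A : (Fin m → Fin n) → ℝ) : Prop :=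
  ∀ i : Fin m → Fin n, (¬ ∀ k l, i k = i l) → A i ≤ 0

/-- `U_{m,n}`: convex hull of the rank-one tensors `x^{⊗m}`. -/
def Ucone (m n : ℕ) : Set ((Fin m → Fin n) → ℝ) :=
  convexHull ℝ {X | ∃ x : Fin n → ℝ, X = rk1 m x}

/-- The tensor `P^m A`. -/
def pmul {m n : ℕ} (P : Matrix (Fin n) (Fin n) ℝ) (A : (Fin m → Fin n) → ℝ) :
    (Fin m → Fin n) → ℝ :=
  fun i => ∑ j : Fin m → Fin n, (∏ k, P (i k) (j k)) * A j

/-- A real-valued function on ℝⁿ is a sum of squares of polynomials. -/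
def IsSOSFun {n : ℕ} (f : (Fin n → ℝ) → ℝ) : Prop :=
  ∃ (r : ℕ) (g : Fin r → MvPolynomial (Fin n) ℝ),
    ∀ x, f x = ∑ j, (MvPolynomial.eval x (g j)) ^ 2

/-- A polynomial is a sum of squares of polynomials. -/
def IsSOSPoly {n : ℕ} (f : MvPolynomial (Fin n) ℝ) : Prop :=
  ∃ (r : ℕ) (g : Fin r → MvPolynomial (Fin n) ℝ), f = ∑ j, (g j) ^ 2

/-- A polynomial has essentially nonpositive coefficients (w.r.t. degree m):
    every coefficient except the constant term and those of `x_i^m` is ≤ 0. -/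
def EssNonposCoeff {n : ℕ} (m : ℕ) (f : MvPolynomial (Fin n) ℝ) : Prop :=
  ∀ α : Fin n →₀ ℕ, α ≠ 0 → (∀ i, α ≠ Finsupp.single i m) → f.coeff α ≤ 0

open Matrix in
private lemma yuan_qf_expand {n : ℕ} (M : Matrix (Fin n) (Fin n) ℝ) (x : Fin n → ℝ) :
    x ⬝ᵥ M.mulVec x = ∑ i, ∑ j, x i * M i j * x j := by
  simp [dotProduct, Matrix.mulVec, Finset.mul_sum, mul_assoc]

open Matrix in
private lemma yuan_key {n : ℕ} (B : Matrix (Fin n) (Fin n) ℝ)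
    (hoff : ∀ i j, i ≠ j → B i j ≤ 0)
    (a b : ℝ) (ha : 0 ≤ a) (hb : 0 ≤ b) (y z : Fin n → ℝ) :
    (fun i => Real.sqrt (a * y i ^ 2 + b * z i ^ 2)) ⬝ᵥ
      B.mulVec (fun i => Real.sqrt (a * y i ^ 2 + b * z i ^ 2)) ≤
    a * (y ⬝ᵥ B.mulVec y) + b * (z ⬝ᵥ B.mulVec z) := by
  set w : Fin n → ℝ := fun i => Real.sqrt (a * y i ^ 2 + b * z i ^ 2) with hw
  have hwnn : ∀ i, 0 ≤ w i := fun i => Real.sqrt_nonneg _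
  have hwsq : ∀ i, w i ^ 2 = a * y i ^ 2 + b * z i ^ 2 := by
    intro i
    exact Real.sq_sqrt (by positivity)
  rw [yuan_qf_expand, yuan_qf_expand, yuan_qf_expand, Finset.mul_sum, Finset.mul_sum,
    ← Finset.sum_add_distrib]
  apply Finset.sum_le_sum
  intro i _
  rw [Finset.mul_sum, Finset.mul_sum, ← Finset.sum_add_distrib]
  apply Finset.sum_le_sum
  intro j _
  by_cases hij : i = j
  · subst hij
    have h2 : w i * B i i * w i = a * (y i * B i i * y i) + b * (z i * B i i * z i) := by
      have h3 : w i * B i i * w i = w i ^ 2 * B i i := by ring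
      rw [h3, hwsq i]; ring
    exact le_of_eq h2
  · have hB := hoff i j hij
    have hc : a * (y i * y j) + b * (z i * z j) ≤ w i * w j := by
      nlinarith [mul_nonneg (mul_nonneg ha hb) (sq_nonneg (y i * z j - z i * y j)),
        mul_nonneg (hwnn i) (hwnn j), hwsq i, hwsq j,
        sq_nonneg (w i * w j + (a * (y i * y j) + b * (z i * z j)))]
    nlinarith [hc, hB]

open Matrix in
private lemma yuan_congr_qf {n : ℕ} (Q M : Matrix (Fin n) (Fin n) ℝ) (y : Fin n → ℝ) :
    y ⬝ᵥ (Qᵀ * M * Q).mulVec y = (Q.mulVec y) ⬝ᵥ M.mulVec (Q.mulVec y) := by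
  rw [← Matrix.mulVec_mulVec, ← Matrix.mulVec_mulVec, Matrix.dotProduct_mulVec,
    Matrix.vecMul_transpose]

open Matrix in
private lemma yuan_sum_mulVec {n p : ℕ} (M : Fin (p+1) → Matrix (Fin n) (Fin n) ℝ)
    (x : Fin n → ℝ) : (∑ l, M l).mulVec x = ∑ l, (M l).mulVec x := by
  funext i
  simp only [Matrix.mulVec, dotProduct, Matrix.sum_apply, Finset.sum_apply,
    Finset.sum_mul]
  exact Finset.sum_comm ..

open Matrix in
private lemma yuan_dot_sum {n p : ℕ} (v : Fin (p+1) → Fin n → ℝ) (x : Fin n → ℝ) :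
    x ⬝ᵥ (∑ l, v l) = ∑ l, x ⬝ᵥ v l := by
  simp only [dotProduct, Finset.sum_apply, Finset.mul_sum]
  exact Finset.sum_comm ..

open Matrix in
private lemma yuan_lin_qf {n p : ℕ} (A : Fin (p+1) → Matrix (Fin n) (Fin n) ℝ)
    (c : Fin (p+1) → ℝ) (x : Fin n → ℝ) :
    x ⬝ᵥ (∑ l, c l • A l).mulVec x = ∑ l, c l * (x ⬝ᵥ (A l).mulVec x) := by
  rw [yuan_sum_mulVec, yuan_dot_sum]
  apply Finset.sum_congr rfl
  intro l _
  rw [Matrix.smul_mulVec, dotProduct_smul, smul_eq_mul]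

open Matrix in
/-- Matrix case of Yuan's theorem of the alternative. -/
theorem stmt10 (n p : ℕ) (A : Fin (p + 1) → Matrix (Fin n) (Fin n) ℝ)
    (hA : ∀ l, (A l).IsSymm)
    (Q : Matrix (Fin n) (Fin n) ℝ) (hQ : IsUnit Q.det)
    (hoff : ∀ l, ∀ i j : Fin n, i ≠ j → (Q.transpose * A l * Q) i j ≤ 0) :
    Xor' (∃ x : Fin n → ℝ, ∀ l, x ⬝ᵥ (A l).mulVec x < 0)
      (∃ lam : Fin (p + 1) → ℝ, (∀ l, 0 ≤ lam l) ∧ (∑ l, lam l) = 1 ∧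
        (∑ l, lam l • A l).PosSemidef) := by
  classical
  set B : Fin (p+1) → Matrix (Fin n) (Fin n) ℝ := fun l => Qᵀ * A l * Q with hB
  have hBoff : ∀ l, ∀ i j, i ≠ j → B l i j ≤ 0 := hoff
  -- the two alternatives cannot both hold
  have hnotboth : ¬ ((∃ x : Fin n → ℝ, ∀ l, x ⬝ᵥ (A l).mulVec x < 0) ∧
      (∃ lam : Fin (p + 1) → ℝ, (∀ l, 0 ≤ lam l) ∧ (∑ l, lam l) = 1 ∧
        (∑ l, lam l • A l).PosSemidef)) := by
    rintro ⟨⟨x, hx⟩, ⟨lam, hnn, hsum, hpsd⟩⟩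
    have h0 := (Matrix.posSemidef_iff_dotProduct_mulVec.1 hpsd).2 x
    rw [star_trivial, yuan_lin_qf] at h0
    have hex : ∃ l, 0 < lam l := by
      by_contra hno
      push_neg at hno
      have hz : ∑ l, lam l = 0 :=
        le_antisymm (Finset.sum_nonpos fun l _ => hno l)
          (Finset.sum_nonneg fun l _ => hnn l)
      rw [hz] at hsum; norm_num at hsum
    obtain ⟨l0, hl0⟩ := hex
    have hlt : ∑ l, lam l * (x ⬝ᵥ (A l).mulVec x) < ∑ _l : Fin (p+1), (0:ℝ) := by
      apply Finset.sum_lt_sum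
      · intro l _
        exact mul_nonpos_of_nonneg_of_nonpos (hnn l) (hx l).le
      · exact ⟨l0, Finset.mem_univ l0, mul_neg_of_pos_of_neg hl0 (hx l0)⟩
    simp at hlt
    linarith
  rcases Classical.em (∃ x : Fin n → ℝ, ∀ l, x ⬝ᵥ (A l).mulVec x < 0) with hi | hi
  · exact Or.inl ⟨hi, fun h2 => hnotboth ⟨hi, h2⟩⟩
  right
  refine ⟨?_, hi⟩
  -- inverse of Q
  have hQQi : Q * Q⁻¹ = 1 := Matrix.mul_nonsing_inv Q hQ
  -- the convex sets
  set φ : (Fin n → ℝ) → Fin (p+1) → ℝ := fun y l => y ⬝ᵥ (B l).mulVec y with hφ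
  set K : Set (Fin (p+1) → ℝ) := {v | ∃ y, ∀ l, φ y l ≤ v l} with hK
  set O : Set (Fin (p+1) → ℝ) := {v | ∀ l, v l < 0} with hO
  have hOopen : IsOpen O := by
    have he : O = Set.pi Set.univ (fun _ : Fin (p+1) => Set.Iio (0:ℝ)) := by
      ext v; simp [hO, Set.mem_pi]
    rw [he]
    exact isOpen_set_pi Set.finite_univ fun _ _ => isOpen_Iio
  have hOconv : Convex ℝ O := by
    intro v hv w hw a b ha hb hab
    intro l
    have h1 : a * v l ≤ 0 := mul_nonpos_of_nonneg_of_nonpos ha (hv l).le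
    have h2 : b * w l ≤ 0 := mul_nonpos_of_nonneg_of_nonpos hb (hw l).le
    have : a * v l + b * w l < 0 := by
      rcases ha.lt_or_eq with ha' | ha'
      · have : a * v l < 0 := mul_neg_of_pos_of_neg ha' (hv l)
        linarith
      · have hb' : b = 1 := by rw [← ha'] at hab; linarith
        rw [← ha', hb']; simp; exact hw l
    simpa using this
  have hKconv : Convex ℝ K := by
    rintro v1 ⟨y1, h1⟩ v2 ⟨y2, h2⟩ a b ha hb hab
    refine ⟨fun i => Real.sqrt (a * y1 i ^ 2 + b * y2 i ^ 2), fun l => ?_⟩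
    have hkey := yuan_key (B l) (hBoff l) a b ha hb y1 y2
    have hle : a * φ y1 l + b * φ y2 l ≤ a * v1 l + b * v2 l := by
      have e1 := mul_le_mul_of_nonneg_left (h1 l) ha
      have e2 := mul_le_mul_of_nonneg_left (h2 l) hb
      linarith
    have : φ (fun i => Real.sqrt (a * y1 i ^ 2 + b * y2 i ^ 2)) l ≤ a * v1 l + b * v2 l :=
      le_trans hkey hle
    simpa using this
  have hdisj : Disjoint O K := by
    rw [Set.disjoint_left]
    rintro v hvO ⟨y, hy⟩
    refine hi ⟨Q.mulVec y, fun l => ?_⟩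
    have : φ y l < 0 := lt_of_le_of_lt (hy l) (hvO l)
    rw [hφ] at this
    simpa [hB, yuan_congr_qf] using this
  obtain ⟨f, u, hfO, hfK⟩ := geometric_hahn_banach_open hOconv hOopen hKconv hdisj
  have hK0 : (0 : Fin (p+1) → ℝ) ∈ K := by
    refine ⟨0, fun l => ?_⟩
    simp [hφ]
  have hu0 : u ≤ 0 := by simpa using hfK 0 hK0
  -- K is a cone for positive scaling
  have hKcone : ∀ v ∈ K, ∀ c : ℝ, 0 < c → c • v ∈ K := by
    rintro v ⟨y, hy⟩ c hc
    refine ⟨fun i => Real.sqrt (c * y i ^ 2 + 0 * (0:ℝ) ^ 2), fun l => ?_⟩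
    have hkey := yuan_key (B l) (hBoff l) c 0 hc.le le_rfl y 0
    have hz : φ (0 : Fin n → ℝ) l = 0 := by simp [hφ]
    have step1 : φ (fun i => Real.sqrt (c * y i ^ 2 + 0 * (0:ℝ) ^ 2)) l ≤ c * φ y l := by
      have := hkey
      rw [hφ]
      simpa [hz, hφ] using hkey
    have step2 : c * φ y l ≤ c * v l := mul_le_mul_of_nonneg_left (hy l) hc.le
    have : φ (fun i => Real.sqrt (c * y i ^ 2 + 0 * (0:ℝ) ^ 2)) l ≤ c * v l :=
      le_trans step1 step2
    simpa using this
  -- f is nonnegative on K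
  have hfKnn : ∀ v ∈ K, 0 ≤ f v := by
    intro v hv
    by_contra hneg
    push_neg at hneg
    have hfv : 0 < -f v := neg_pos.2 hneg
    set c := (|u| + 1) / (-f v) with hc
    have hcpos : 0 < c := div_pos (by positivity) hfv
    have hks := hfK _ (hKcone v hv c hcpos)
    rw [_root_.map_smul, smul_eq_mul] at hks
    have hval : c * f v = -(|u| + 1) := by
      calc c * f v = -(c * (-f v)) := by ring
      _ = -(|u| + 1) := by rw [hc, div_mul_cancel₀ _ hfv.ne']
    rw [hval] at hks
    have := neg_abs_le u
    linarith
  -- the coefficients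
  set lam0 : Fin (p+1) → ℝ := fun l => f (fun j => if l = j then 1 else 0) with hlam0
  have hrep : ∀ v : Fin (p+1) → ℝ, f v = ∑ l, v l * lam0 l := by
    intro v
    conv_lhs => rw [pi_eq_sum_univ v]
    rw [map_sum]
    exact Finset.sum_congr rfl fun l _ => by rw [_root_.map_smul, smul_eq_mul]
  have hlamnn : ∀ l, 0 ≤ lam0 l := by
    intro l
    by_contra hneg
    push_neg at hneg
    set T : ℝ := ∑ k ∈ Finset.univ.erase l, lam0 k with hT
    set t : ℝ := (|T| + 1) / (-lam0 l) with ht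
    have htpos : 0 < t := div_pos (by positivity) (neg_pos.2 hneg)
    set v : Fin (p+1) → ℝ := fun k => if l = k then -t else -1 with hv
    have hvO : v ∈ O := by
      intro k
      rw [hv]
      by_cases h : l = k
      · simp [h]; linarith
      · simp [h]
    have hfv : f v ≤ 0 := le_trans (hfO v hvO).le hu0
    rw [hrep] at hfv
    have hsplit : ∑ k, v k * lam0 k = -t * lam0 l + ∑ k ∈ Finset.univ.erase l, (-1) * lam0 k := by
      rw [← Finset.add_sum_erase _ _ (Finset.mem_univ l)]
      congr 1
      · simp [hv]
      · apply Finset.sum_congr rfl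
        intro k hk
        have : l ≠ k := fun h => (Finset.mem_erase.1 hk).1 h.symm
        simp [hv, this]
    rw [hsplit] at hfv
    have hTeq : ∑ k ∈ Finset.univ.erase l, (-1:ℝ) * lam0 k = -T := by
      rw [hT, ← Finset.sum_neg_distrib]
      apply Finset.sum_congr rfl
      intro k _; ring
    rw [hTeq] at hfv
    have hne' : -lam0 l ≠ 0 := ne_of_gt (neg_pos.2 hneg)
    have htl : t * lam0 l = -(|T| + 1) := by
      calc t * lam0 l = -(t * (-lam0 l)) := by ring
      _ = -(|T| + 1) := by rw [ht, div_mul_cancel₀ _ hne']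
    have habs : T ≤ |T| := le_abs_self T
    nlinarith
  have hlsum : 0 < ∑ l, lam0 l := by
    have hv : (fun _ : Fin (p+1) => (-1:ℝ)) ∈ O := fun l => by norm_num
    have hlt := lt_of_lt_of_le (hfO _ hv) hu0
    rw [hrep] at hlt
    have : ∑ l, (-1:ℝ) * lam0 l = -∑ l, lam0 l := by
      rw [← Finset.sum_neg_distrib]; apply Finset.sum_congr rfl; intro l _; ring
    rw [this] at hlt
    linarith
  set S0 : ℝ := ∑ l, lam0 l with hS0
  refine ⟨fun l => lam0 l / S0, fun l => div_nonneg (hlamnn l) hlsum.le, ?_, Matrix.posSemidef_iff_dotProduct_mulVec.2 ⟨?_, ?_⟩⟩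
  · rw [← Finset.sum_div]
    exact div_self hlsum.ne'
  · -- IsHermitian
    rw [Matrix.IsHermitian, Matrix.conjTranspose_eq_transpose_of_trivial, Matrix.transpose_sum]
    apply Finset.sum_congr rfl
    intro l _
    rw [Matrix.transpose_smul, (hA l)]
  · -- quadratic form nonneg
    intro x
    rw [star_trivial, yuan_lin_qf]
    set y : Fin n → ℝ := Q⁻¹.mulVec x with hy
    have hxy : Q.mulVec y = x := by
      rw [hy, Matrix.mulVec_mulVec, hQQi, Matrix.one_mulVec]
    have hKy : φ y ∈ K := ⟨y, fun l => le_rfl⟩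
    have h0 := hfKnn _ hKy
    rw [hrep] at h0
    have heq : ∀ l, x ⬝ᵥ (A l).mulVec x = φ y l := by
      intro l
      rw [hφ]
      simp only [hB]
      rw [yuan_congr_qf, hxy]
    have hfin : ∑ l, lam0 l / S0 * (x ⬝ᵥ (A l).mulVec x)
        = (1 / S0) * ∑ l, φ y l * lam0 l := by
      rw [Finset.mul_sum]
      apply Finset.sum_congr rfl
      intro l _
      rw [heq l]; ring
    rw [hfin]
    exact mul_nonneg (by positivity) h0
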